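/- arXiv:1403.4907 — 2 statements merged into one kernel-verified Lean document; each statement's English description precedes it below -/
import Mathlib

section
/- In a non-commutative probability space (A,φ), for each n ≥ 1 and χ : {1,…,n} → {ℓ,r} there exists a unique family of multilinear functionals κ_χ : Aⁿ → ℂ (the (ℓ,r)-cumulants) such that φ(z_1⋯z_n) = Σ_{π ∈ BNC(χ)} Π_{V ∈ π} κ_{χ|_V}((z_1,…,z_n)|_V) for all z_1,…,z_n ∈ A. -/
open scoped BigOperators

def permAct {n : ℕ} (s : Equiv.Perm (Fin n)) (π : Setoid (Fin n)) : Setoid (Fin n) :=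
  Setoid.comap (fun x => s⁻¹ x) π

def IsNonCrossing {n : ℕ} (π : Setoid (Fin n)) : Prop :=
  ∀ a b c d : Fin n, a < b → b < c → c < d → π.r a c → π.r b d → π.r a b

def leftF {n : ℕ} (χ : Fin n → Bool) : Finset (Fin n) :=
  Finset.univ.filter fun i => χ i = true

def rightF {n : ℕ} (χ : Fin n → Bool) : Finset (Fin n) :=
  Finset.univ.filter fun i => χ i = false

theorem card_leftF_add_rightF {n : ℕ} (χ : Fin n → Bool) :
    (leftF χ).card + (rightF χ).card = n := by
  classical
  have h := Finset.card_filter_add_card_filter_not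
    (s := (Finset.univ : Finset (Fin n))) (p := fun i => χ i = true)
  simpa [leftF, rightF, Bool.not_eq_true] using h

noncomputable def eqLeft {n : ℕ} (χ : Fin n → Bool) :
    Fin (leftF χ).card ≃ {x : Fin n // χ x = true} :=
  ((leftF χ).orderIsoOfFin rfl).toEquiv.trans
    (Equiv.subtypeEquivRight (fun x => by simp [leftF]))

noncomputable def eqRight {n : ℕ} (χ : Fin n → Bool) :
    Fin (rightF χ).card ≃ {x : Fin n // ¬ χ x = true} :=
  (Fin.revPerm.trans ((rightF χ).orderIsoOfFin rfl).toEquiv).trans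
    (Equiv.subtypeEquivRight (fun x => by simp [rightF]))

noncomputable def sPerm {n : ℕ} (χ : Fin n → Bool) : Equiv.Perm (Fin n) :=
  (((finCongr (card_leftF_add_rightF χ).symm).trans finSumFinEquiv.symm).trans
    ((eqLeft χ).sumCongr (eqRight χ))).trans (Equiv.sumCompl fun i => χ i = true)

def BNC {n : ℕ} (χ : Fin n → Bool) : Set (Setoid (Fin n)) :=
  {π | ∃ σ, IsNonCrossing σ ∧ π = permAct (sPerm χ) σ}

noncomputable def blockFinset {n : ℕ} (V : Set (Fin n)) : Finset (Fin n) :=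
  V.toFinite.toFinset

noncomputable def blockCard {n : ℕ} (V : Set (Fin n)) : ℕ := (blockFinset V).card

noncomputable def enum {n : ℕ} (V : Set (Fin n)) : Fin (blockCard V) → Fin n :=
  fun i => (blockFinset V).orderEmbOfFin rfl i

/-! ### Auxiliary material -/

instance setoidFinite {n : ℕ} : Finite (Setoid (Fin n)) :=
  Finite.of_injective (fun s => (s : Fin n → Fin n → Prop))
    (fun _ _ h => Setoid.ext fun x y => iff_of_eq (congrFun (congrFun h x) y))

noncomputable def BNCfin {n : ℕ} (χ : Fin n → Bool) : Finset (Setoid (Fin n)) :=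
  (Set.toFinite (BNC χ)).toFinset

noncomputable def classesFin {n : ℕ} (π : Setoid (Fin n)) : Finset (Set (Fin n)) :=
  (Set.toFinite π.classes).toFinset

lemma mem_blockFinset {n : ℕ} {V : Set (Fin n)} {i : Fin n} :
    i ∈ blockFinset V ↔ i ∈ V := Set.Finite.mem_toFinset _

lemma mem_classesFin {n : ℕ} {π : Setoid (Fin n)} {V : Set (Fin n)} :
    V ∈ classesFin π ↔ V ∈ π.classes := Set.Finite.mem_toFinset _

lemma mem_BNCfin {n : ℕ} {χ : Fin n → Bool} {π : Setoid (Fin n)} :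
    π ∈ BNCfin χ ↔ π ∈ BNC χ := Set.Finite.mem_toFinset _

lemma enum_mem {n : ℕ} (V : Set (Fin n)) (j : Fin (blockCard V)) : enum V j ∈ V :=
  mem_blockFinset.mp (Finset.orderEmbOfFin_mem _ rfl j)

lemma enum_inj {n : ℕ} (V : Set (Fin n)) : Function.Injective (enum V) :=
  ((blockFinset V).orderEmbOfFin rfl).injective

lemma exists_enum {n : ℕ} {V : Set (Fin n)} {i : Fin n} (h : i ∈ V) :
    ∃ j, enum V j = i := by
  have : i ∈ Set.range (fun j => (blockFinset V).orderEmbOfFin rfl j) := by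
    rw [show (fun j => (blockFinset V).orderEmbOfFin rfl j)
        = ⇑((blockFinset V).orderEmbOfFin rfl) from rfl,
      Finset.range_orderEmbOfFin]
    exact_mod_cast mem_blockFinset.mpr h
  exact this

lemma class_nonempty {n : ℕ} {π : Setoid (Fin n)} {V : Set (Fin n)}
    (h : V ∈ π.classes) : V.Nonempty := by
  obtain ⟨a, rfl⟩ := h
  exact ⟨a, π.refl' a⟩

lemma blockCard_pos {n : ℕ} {π : Setoid (Fin n)} {V : Set (Fin n)}
    (h : V ∈ π.classes) : 1 ≤ blockCard V := by
  obtain ⟨a, ha⟩ := class_nonempty h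
  exact Finset.card_pos.mpr ⟨a, mem_blockFinset.mpr ha⟩

lemma blockCard_le {n : ℕ} (V : Set (Fin n)) : blockCard V ≤ n := by
  simpa [blockCard] using Finset.card_le_card (Finset.subset_univ (blockFinset V))

lemma blockCard_lt {n : ℕ} {π : Setoid (Fin n)} (hπ : π ≠ ⊤) {V : Set (Fin n)}
    (h : V ∈ π.classes) : blockCard V < n := by
  refine lt_of_le_of_ne (blockCard_le V) fun hc => hπ ?_
  have huniv : blockFinset V = Finset.univ :=
    Finset.eq_univ_of_card _ (by simpa [blockCard] using hc)
  have hV : V = Set.univ := by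
    ext x
    simp only [Set.mem_univ, iff_true]
    exact mem_blockFinset.mp (huniv ▸ Finset.mem_univ x)
  obtain ⟨a, haV⟩ := h
  rw [Setoid.eq_top_iff]
  intro x y
  have hx : π x a := by have : x ∈ V := hV ▸ Set.mem_univ x; rwa [haV] at this
  have hy : π y a := by have : y ∈ V := hV ▸ Set.mem_univ y; rwa [haV] at this
  exact π.trans' hx (π.symm' hy)

lemma top_mem_BNC {n : ℕ} (χ : Fin n → Bool) : (⊤ : Setoid (Fin n)) ∈ BNC χ := by
  refine ⟨⊤, fun a b c d _ _ _ _ _ => trivial, ?_⟩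
  apply Setoid.ext
  intro x y
  constructor
  · intro _; exact trivial
  · intro _; exact trivial

lemma classes_top {n : ℕ} (hn : 1 ≤ n) :
    (⊤ : Setoid (Fin n)).classes = {Set.univ} := by
  ext V
  constructor
  · rintro ⟨y, rfl⟩
    simp only [Set.mem_singleton_iff]
    ext x
    simp only [Set.mem_setOf_eq, Set.mem_univ, iff_true]
    exact trivial
  · rintro rfl
    exact ⟨⟨0, hn⟩, by ext x; simp⟩

lemma blockFinset_univ {n : ℕ} : blockFinset (Set.univ : Set (Fin n)) = Finset.univ := by
  exact Finset.eq_univ_iff_forall.mpr fun x => mem_blockFinset.mpr trivial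

lemma blockCard_univ {n : ℕ} : blockCard (Set.univ : Set (Fin n)) = n := by
  rw [blockCard, blockFinset_univ, Finset.card_univ, Fintype.card_fin]

lemma enum_univ {n : ℕ} (i : Fin (blockCard (Set.univ : Set (Fin n)))) :
    enum (Set.univ : Set (Fin n)) i = Fin.cast blockCard_univ i := by
  have h := Finset.orderEmbOfFin_unique
    (s := blockFinset (Set.univ : Set (Fin n))) rfl
    (f := fun j => Fin.cast blockCard_univ j)
    (fun x => mem_blockFinset.mpr trivial)
    (fun a b hab => hab)
  exact (congrFun h i).symm

lemma cast_apply {C : Type*} (F : ∀ k : ℕ, (Fin k → Bool) → (Fin k → C) → ℂ)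
    {a b : ℕ} (h : a = b) (χ : Fin b → Bool) (z : Fin b → C) :
    F a (fun i => χ (Fin.cast h i)) (fun i => z (Fin.cast h i)) = F b χ z := by
  subst h; rfl

noncomputable instance setoidDecEq {n : ℕ} : DecidableEq (Setoid (Fin n)) :=
  Classical.decEq _

section Kdef

variable {A : Type*} [Ring A] [Algebra ℂ A]

noncomputable def Kfun (φ : A →ₗ[ℂ] ℂ) : ∀ m : ℕ, (Fin m → Bool) → (Fin m → A) → ℂ
  | m, χ, z =>
    φ (List.ofFn z).prod -
      ∑ π ∈ ((BNCfin χ).erase ⊤).attach, ∏ V ∈ (classesFin π.1).attach,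
        Kfun φ (blockCard V.1) (fun i => χ (enum V.1 i)) (fun i => z (enum V.1 i))
  termination_by m _ _ => m
  decreasing_by
    exact blockCard_lt (Finset.ne_of_mem_erase π.2) (mem_classesFin.mp V.2)

lemma Kfun_eq (φ : A →ₗ[ℂ] ℂ) (m : ℕ) (χ : Fin m → Bool) (z : Fin m → A) :
    Kfun φ m χ z =
      φ (List.ofFn z).prod -
        ∑ π ∈ (BNCfin χ).erase ⊤, ∏ V ∈ classesFin π,
          Kfun φ (blockCard V) (fun i => χ (enum V i)) (fun i => z (enum V i)) := by
  rw [Kfun]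
  congr 1
  rw [← Finset.sum_attach ((BNCfin χ).erase ⊤)]
  refine Finset.sum_congr rfl fun π _ => ?_
  rw [← Finset.prod_attach (classesFin π.1)]

lemma prod_classes_update {n : ℕ} (π : Setoid (Fin n))
    (g : (V : Set (Fin n)) → (Fin (blockCard V) → A) → ℂ) (i : Fin n) (z : Fin n → A) :
    ∃ (V₀ : Set (Fin n)) (j₀ : Fin (blockCard V₀)) (c : ℂ), V₀ ∈ π.classes ∧
      ∀ t : A, (∏ V ∈ classesFin π, g V (fun j => Function.update z i t (enum V j))) =
        g V₀ (Function.update (fun j => z (enum V₀ j)) j₀ t) * c := by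
  classical
  set V₀ : Set (Fin n) := {x | π x i} with hV₀def
  have hV₀ : V₀ ∈ π.classes := π.mem_classes i
  have hiV₀ : i ∈ V₀ := π.refl' i
  obtain ⟨j₀, hj₀⟩ := exists_enum hiV₀
  refine ⟨V₀, j₀, ∏ V ∈ (classesFin π).erase V₀, g V (fun j => z (enum V j)), hV₀, fun t => ?_⟩
  rw [← Finset.mul_prod_erase _ _ (mem_classesFin.mpr hV₀)]
  congr 1
  · congr 1
    funext j
    by_cases hj : j = j₀
    · subst hj
      rw [hj₀, Function.update_self, Function.update_self]
    · have hne : enum V₀ j ≠ i := fun h => hj (enum_inj V₀ (h.trans hj₀.symm))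
      rw [Function.update_of_ne hne, Function.update_of_ne hj]
  · refine Finset.prod_congr rfl fun V hV => ?_
    have hVne : V ≠ V₀ := (Finset.mem_erase.mp hV).1
    have hVc : V ∈ π.classes := mem_classesFin.mp (Finset.mem_erase.mp hV).2
    have hiV : i ∉ V := fun hi => hVne (Setoid.eq_of_mem_classes hVc hi hV₀ hiV₀)
    congr 1
    funext j
    exact Function.update_of_ne (fun h : enum V j = i => hiV (by rw [← h]; exact enum_mem V j)) t z

lemma Kfun_add (φ : A →ₗ[ℂ] ℂ) :
    ∀ m (χ : Fin m → Bool) (z : Fin m → A) (i : Fin m) (x y : A),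
      Kfun φ m χ (Function.update z i (x + y)) =
        Kfun φ m χ (Function.update z i x) + Kfun φ m χ (Function.update z i y) := by
  intro m
  induction m using Nat.strong_induction_on with
  | _ m ih =>
    intro χ z i x y
    rw [Kfun_eq, Kfun_eq, Kfun_eq]
    have hφ : ∀ w : Fin m → A, φ (List.ofFn w).prod =
        φ.compMultilinearMap (MultilinearMap.mkPiAlgebraFin ℂ m A) w := fun w => by simp
    have hsum : ∑ π ∈ (BNCfin χ).erase ⊤, ∏ V ∈ classesFin π,
          Kfun φ (blockCard V) (fun j => χ (enum V j))
            (fun j => Function.update z i (x + y) (enum V j)) =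
        (∑ π ∈ (BNCfin χ).erase ⊤, ∏ V ∈ classesFin π,
          Kfun φ (blockCard V) (fun j => χ (enum V j))
            (fun j => Function.update z i x (enum V j))) +
        ∑ π ∈ (BNCfin χ).erase ⊤, ∏ V ∈ classesFin π,
          Kfun φ (blockCard V) (fun j => χ (enum V j))
            (fun j => Function.update z i y (enum V j)) := by
      rw [← Finset.sum_add_distrib]
      refine Finset.sum_congr rfl fun π hπ => ?_
      obtain ⟨V₀, j₀, c, hV₀, hprod⟩ := prod_classes_update π
        (fun V w => Kfun φ (blockCard V) (fun j => χ (enum V j)) w) i z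
      rw [hprod, hprod, hprod,
        ih _ (blockCard_lt (Finset.ne_of_mem_erase hπ) hV₀)]
      ring
    rw [hsum, hφ, hφ, hφ, (φ.compMultilinearMap (MultilinearMap.mkPiAlgebraFin ℂ m A)).map_update_add]
    ring

lemma Kfun_smul (φ : A →ₗ[ℂ] ℂ) :
    ∀ m (χ : Fin m → Bool) (z : Fin m → A) (i : Fin m) (c : ℂ) (x : A),
      Kfun φ m χ (Function.update z i (c • x)) =
        c • Kfun φ m χ (Function.update z i x) := by
  intro m
  induction m using Nat.strong_induction_on with
  | _ m ih =>
    intro χ z i c x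
    rw [Kfun_eq, Kfun_eq]
    have hφ : ∀ w : Fin m → A, φ (List.ofFn w).prod =
        φ.compMultilinearMap (MultilinearMap.mkPiAlgebraFin ℂ m A) w := fun w => by simp
    have hsum : ∑ π ∈ (BNCfin χ).erase ⊤, ∏ V ∈ classesFin π,
          Kfun φ (blockCard V) (fun j => χ (enum V j))
            (fun j => Function.update z i (c • x) (enum V j)) =
        c • ∑ π ∈ (BNCfin χ).erase ⊤, ∏ V ∈ classesFin π,
          Kfun φ (blockCard V) (fun j => χ (enum V j))
            (fun j => Function.update z i x (enum V j)) := by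
      rw [Finset.smul_sum]
      refine Finset.sum_congr rfl fun π hπ => ?_
      obtain ⟨V₀, j₀, cc, hV₀, hprod⟩ := prod_classes_update π
        (fun V w => Kfun φ (blockCard V) (fun j => χ (enum V j)) w) i z
      rw [hprod, hprod, ih _ (blockCard_lt (Finset.ne_of_mem_erase hπ) hV₀)]
      rw [smul_mul_assoc]
    rw [hsum, hφ, hφ, (φ.compMultilinearMap (MultilinearMap.mkPiAlgebraFin ℂ m A)).map_update_smul]
    rw [smul_sub]

noncomputable def Kml (φ : A →ₗ[ℂ] ℂ) (m : ℕ) (χ : Fin m → Bool) :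
    MultilinearMap ℂ (fun _ : Fin m => A) ℂ where
  toFun := Kfun φ m χ
  map_update_add' := by
    intro inst z i x y
    have h : inst = instDecidableEqFin m := Subsingleton.elim _ _
    subst h
    exact Kfun_add φ m χ z i x y
  map_update_smul' := by
    intro inst z i c x
    have h : inst = instDecidableEqFin m := Subsingleton.elim _ _
    subst h
    exact Kfun_smul φ m χ z i c x

end Kdef

section Moment

variable {A : Type*} [Ring A] [Algebra ℂ A]

lemma finsum_BNC_eq (F : ∀ k : ℕ, (Fin k → Bool) → (Fin k → A) → ℂ)
    (m : ℕ) (hm : 1 ≤ m) (χ : Fin m → Bool) (z : Fin m → A) :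
    (∑ᶠ π ∈ BNC χ, ∏ᶠ V ∈ Setoid.classes π,
        F (blockCard V) (fun i => χ (enum V i)) (fun i => z (enum V i))) =
      F m χ z + ∑ π ∈ (BNCfin χ).erase ⊤, ∏ V ∈ classesFin π,
        F (blockCard V) (fun i => χ (enum V i)) (fun i => z (enum V i)) := by
  classical
  rw [finsum_mem_eq_finite_toFinset_sum _ (Set.toFinite (BNC χ))]
  have h1 : ∀ π ∈ (Set.toFinite (BNC χ)).toFinset,
      (∏ᶠ V ∈ Setoid.classes π,
        F (blockCard V) (fun i => χ (enum V i)) (fun i => z (enum V i))) =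
      ∏ V ∈ classesFin π,
        F (blockCard V) (fun i => χ (enum V i)) (fun i => z (enum V i)) := fun π _ =>
    finprod_mem_eq_finite_toFinset_prod _ (Set.toFinite _)
  rw [Finset.sum_congr rfl h1]
  have htopmem : (⊤ : Setoid (Fin m)) ∈ (Set.toFinite (BNC χ)).toFinset :=
    (Set.Finite.mem_toFinset _).mpr (top_mem_BNC χ)
  rw [← Finset.add_sum_erase _ _ htopmem]
  have htop : (∏ V ∈ classesFin (⊤ : Setoid (Fin m)),
      F (blockCard V) (fun i => χ (enum V i)) (fun i => z (enum V i))) = F m χ z := by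
    have hc : classesFin (⊤ : Setoid (Fin m)) = {Set.univ} := by
      rw [classesFin]
      ext V
      rw [Set.Finite.mem_toFinset, classes_top hm]
      simp
    rw [hc, Finset.prod_singleton]
    simp only [enum_univ]
    exact cast_apply F blockCard_univ χ z
  rw [htop]
  rfl

lemma Kfun_moment (φ : A →ₗ[ℂ] ℂ) (m : ℕ) (hm : 1 ≤ m) (χ : Fin m → Bool) (z : Fin m → A) :
    φ (List.ofFn z).prod = ∑ᶠ π ∈ BNC χ, ∏ᶠ V ∈ Setoid.classes π,
      Kfun φ (blockCard V) (fun i => χ (enum V i)) (fun i => z (enum V i)) := by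
  rw [finsum_BNC_eq (Kfun φ) m hm χ z, Kfun_eq]
  ring

lemma Kfun_unique (φ : A →ₗ[ℂ] ℂ) (F : ∀ k : ℕ, (Fin k → Bool) → (Fin k → A) → ℂ)
    (hF : ∀ m : ℕ, 1 ≤ m → ∀ (χ : Fin m → Bool) (z : Fin m → A),
      φ (List.ofFn z).prod = ∑ᶠ π ∈ BNC χ, ∏ᶠ V ∈ Setoid.classes π,
        F (blockCard V) (fun i => χ (enum V i)) (fun i => z (enum V i))) :
    ∀ m : ℕ, 1 ≤ m → ∀ (χ : Fin m → Bool) (z : Fin m → A), F m χ z = Kfun φ m χ z := by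
  intro m
  induction m using Nat.strong_induction_on with
  | _ m ih =>
    intro hm χ z
    have h := hF m hm χ z
    rw [finsum_BNC_eq F m hm χ z] at h
    have hsum : ∑ π ∈ (BNCfin χ).erase ⊤, ∏ V ∈ classesFin π,
          F (blockCard V) (fun i => χ (enum V i)) (fun i => z (enum V i)) =
        ∑ π ∈ (BNCfin χ).erase ⊤, ∏ V ∈ classesFin π,
          Kfun φ (blockCard V) (fun i => χ (enum V i)) (fun i => z (enum V i)) := by
      refine Finset.sum_congr rfl fun π hπ => Finset.prod_congr rfl fun V hV => ?_
      have hVc := mem_classesFin.mp hV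
      exact ih _ (blockCard_lt (Finset.ne_of_mem_erase hπ) hVc) (blockCard_pos hVc) _ _
    rw [hsum] at h
    have h2 := Kfun_eq φ m χ z
    linear_combination -h - h2

end Moment

/-- Existence and uniqueness of the `(ℓ,r)`-cumulant functionals: in a non-commutative
probability space `(A,φ)` there is a family of multilinear functionals
`κ_χ : Aⁿ → ℂ` (for `n ≥ 1` and `χ : {1,…,n} → {ℓ,r}`) satisfying the moment-cumulant
formula `φ(z_1⋯z_n) = Σ_{π ∈ BNC(χ)} Π_{V ∈ π} κ_{χ|_V}((z_1,…,z_n)|_V)`, and any two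
such families agree (for `n ≥ 1`). -/
theorem exists_unique_lr_cumulants (A : Type*) [Ring A] [Algebra ℂ A]
    (φ : A →ₗ[ℂ] ℂ) (hφ : φ 1 = 1) :
    ∃ K : ∀ m : ℕ, (Fin m → Bool) → MultilinearMap ℂ (fun _ : Fin m => A) ℂ,
      (∀ m : ℕ, 1 ≤ m → ∀ (χ : Fin m → Bool) (z : Fin m → A),
        φ (List.ofFn z).prod = ∑ᶠ π ∈ BNC χ, ∏ᶠ V ∈ Setoid.classes π,
          K (blockCard V) (fun i => χ (enum V i)) (fun i => z (enum V i))) ∧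
      ∀ K' : ∀ m : ℕ, (Fin m → Bool) → MultilinearMap ℂ (fun _ : Fin m => A) ℂ,
        (∀ m : ℕ, 1 ≤ m → ∀ (χ : Fin m → Bool) (z : Fin m → A),
          φ (List.ofFn z).prod = ∑ᶠ π ∈ BNC χ, ∏ᶠ V ∈ Setoid.classes π,
            K' (blockCard V) (fun i => χ (enum V i)) (fun i => z (enum V i))) →
        ∀ m : ℕ, 1 ≤ m → ∀ χ : Fin m → Bool, K' m χ = K m χ := by
  refine ⟨fun m χ => Kml φ m χ, ?_, ?_⟩
  · intro m hm χ z
    exact Kfun_moment φ m hm χ z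
  · intro K' hK' m hm χ
    ext z
    exact Kfun_unique φ (fun k χ' w => K' k χ' w) (fun k hk χ' w => hK' k hk χ' w) m hm χ z
end

section
/- If a two-faced family z' and a two-faced family z'' in (A,φ) are combinatorially-bi-free (all mixed (ℓ,r)-cumulants vanish), then the cumulants of z' + z'' are additive: κ_α(z'+z'') = κ_α(z') + κ_α(z'') for every α : {1,…,n} → I ⊔ J. -/
open scoped BigOperators

/-- If two two-faced families `z'` and `z''` in `(A,φ)` are combinatorially-bi-free (all
mixed `(ℓ,r)`-cumulants vanish), then cumulants are additive:
`κ_α(z'+z'') = κ_α(z') + κ_α(z'')` for every `α : {1,…,n} → I ⊔ J` (`n ≥ 1`).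
Here `K` is the family of `(ℓ,r)`-cumulant functionals of `(A,φ)`, characterized by the
moment-cumulant formula. -/
theorem combinatorially_bifree_cumulants_additive (A : Type*) [Ring A] [Algebra ℂ A]
    (φ : A →ₗ[ℂ] ℂ) (hφ : φ 1 = 1)
    (K : ∀ m : ℕ, (Fin m → Bool) → MultilinearMap ℂ (fun _ : Fin m => A) ℂ)
    (hK : ∀ m : ℕ, 1 ≤ m → ∀ (χ : Fin m → Bool) (z : Fin m → A),
      φ (List.ofFn z).prod = ∑ᶠ π ∈ BNC χ, ∏ᶠ V ∈ Setoid.classes π,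
        K (blockCard V) (fun i => χ (enum V i)) (fun i => z (enum V i)))
    (I J : Type*) (z' z'' : I ⊕ J → A)
    (hbifree : ∀ (m : ℕ) (α : Fin m → I ⊕ J) (ε : Fin m → Bool), (∃ k l, ε k ≠ ε l) →
      K m (fun k => (α k).isLeft)
        (fun k => if ε k then z' (α k) else z'' (α k)) = 0) :
    ∀ (m : ℕ), 1 ≤ m → ∀ (α : Fin m → I ⊕ J),
      K m (fun k => (α k).isLeft) (fun k => z' (α k) + z'' (α k)) =
        K m (fun k => (α k).isLeft) (fun k => z' (α k)) +
        K m (fun k => (α k).isLeft) (fun k => z'' (α k)) := by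
  intro m hm α
  classical
  have key : (fun k => z' (α k) + z'' (α k)) =
      (fun k => z' (α k)) + (fun k => z'' (α k)) := rfl
  rw [key, MultilinearMap.map_add_univ]
  have hzero : ∀ s ∈ (Finset.univ : Finset (Finset (Fin m))),
      s ∉ ({Finset.univ, ∅} : Finset (Finset (Fin m))) →
      K m (fun k => (α k).isLeft)
        (s.piecewise (fun k => z' (α k)) (fun k => z'' (α k))) = 0 := by
    intro s _ hs
    simp only [Finset.mem_insert, Finset.mem_singleton] at hs
    push_neg at hs
    obtain ⟨k, hk⟩ : ∃ k, k ∉ s := by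
      by_contra h; push_neg at h
      exact hs.1 (Finset.eq_univ_iff_forall.2 h)
    obtain ⟨l, hl⟩ : ∃ l, l ∈ s := by
      by_contra h; push_neg at h
      exact hs.2.ne_empty (Finset.eq_empty_iff_forall_notMem.2 h)
    have := hbifree m α (fun k => decide (k ∈ s))
      ⟨k, l, by simp [hk, hl]⟩
    have heq : (fun j => if decide (j ∈ s) then z' (α j) else z'' (α j)) =
        s.piecewise (fun j => z' (α j)) (fun j => z'' (α j)) := by
      funext j
      by_cases hj : j ∈ s <;> simp [Finset.piecewise, hj]
    rwa [heq] at this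
  rw [← Finset.sum_subset (Finset.subset_univ ({Finset.univ, ∅} : Finset (Finset (Fin m))))
    (fun s hs hns => hzero s hs hns)]
  have hne : (Finset.univ : Finset (Fin m)) ≠ ∅ := by
    exact Finset.ne_empty_of_mem (Finset.mem_univ (⟨0, hm⟩ : Fin m))
  rw [Finset.sum_insert (by simpa using hne), Finset.sum_singleton]
  congr 1 <;> congr 1 <;> funext k <;> simp [Finset.piecewise]
end
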